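/- arXiv:math/0509399 — 2 statements merged into one kernel-verified Lean document; each statement's English description precedes it below -/
import Mathlib

section
/- Let R be an irreducible finite reduced crystallographic root system with base B. Every nonzero dominant element λ of the rational span of R (i.e., λ with ⟨λ, α∨⟩ ≥ 0 for all α ∈ B) can be written as λ = Σ_{α∈B} m_α·α where every coefficient m_α is a strictly positive rational number. -/
open scoped RealInnerProductSpace

variable {V : Type*} [NormedAddCommGroup V] [InnerProductSpace ℝ V]

/-- The reflection in the hyperplane orthogonal to `α`:
`x ↦ x - (2⟪α, x⟫/⟪α, α⟫) α`. -/
noncomputable def reflVec (α x : V) : V :=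
  x - ((2 * ⟪α, x⟫) / ⟪α, α⟫) • α

/-- `v` is a linear combination of the elements of `B` with nonnegative
coefficients. -/
def IsNonnegComb (B : Finset V) (v : V) : Prop :=
  ∃ c : V → ℝ, (∀ α, 0 ≤ c α) ∧ v = ∑ α ∈ B, c α • α

/-- A finite reduced crystallographic root system `R` in a Euclidean space `V`,
together with a base (system of simple roots) `B` and the simple reflections
`s α` (realized as linear automorphisms of `V`). -/
structure RootSystemData (V : Type*) [NormedAddCommGroup V]
    [InnerProductSpace ℝ V] where
  /-- the (finite) set of roots -/
  R : Finset V
  /-- the base (system of simple roots) -/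
  B : Finset V
  /-- the reflections: `s α` is the reflection in the hyperplane orthogonal
  to `α` (see `s_apply`) -/
  s : V → (V ≃ₗ[ℝ] V)
  zero_not_mem : (0 : V) ∉ R
  base_subset : B ⊆ R
  base_indep : LinearIndependent ℝ (fun b : {x // x ∈ B} => (b : V))
  /-- reduced: the only multiples of a root `α` that are roots are `±α` -/
  reduced : ∀ α ∈ R, ∀ c : ℝ, c • α ∈ R → c = 1 ∨ c = -1
  /-- crystallographic: `⟨β, α∨⟩ = 2⟪α, β⟫/⟪α, α⟫` is an integer -/
  crystallographic : ∀ α ∈ R, ∀ β ∈ R, ∃ n : ℤ, 2 * ⟪α, β⟫ = (n : ℝ) * ⟪α, α⟫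
  /-- `R` is stable under the reflections in its elements -/
  reflection_mem : ∀ α ∈ R, ∀ β ∈ R, reflVec α β ∈ R
  /-- `s α` is the reflection in the hyperplane orthogonal to `α` -/
  s_apply : ∀ α ∈ R, ∀ x : V, s α x = reflVec α x
  /-- every root is a nonnegative or a nonpositive combination of the base -/
  pos_or_neg : ∀ β ∈ R, IsNonnegComb B β ∨ IsNonnegComb B (-β)

/-- The positive roots: the roots which are nonnegative combinations of the
base. -/
noncomputable def posRoots (P : RootSystemData V) : Finset V :=
  @Finset.filter V (fun v => IsNonnegComb P.B v) (Classical.decPred _) P.R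

/-- The set of simple reflections. -/
def simples (P : RootSystemData V) : Set (V ≃ₗ[ℝ] V) :=
  P.s '' (P.B : Set V)

/-- The Weyl group: the subgroup of `GL(V)` generated by the simple
reflections. -/
def weylGroup (P : RootSystemData V) : Subgroup (V ≃ₗ[ℝ] V) :=
  Subgroup.closure (simples P)

/-- The length of `w` with respect to a generating set `S`: the least number of
factors in an expression of `w` as a product of elements of `S`. -/
noncomputable def lengthIn {G : Type*} [Group G] (S : Set G) (w : G) : ℕ :=
  sInf {n | ∃ l : List G, l.length = n ∧ (∀ x ∈ l, x ∈ S) ∧ l.prod = w}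

/-- The Dynkin diagram on a set `I` of simple roots: vertices are the elements
of `I`, with an edge between two distinct roots exactly when they are not
orthogonal. -/
def dynkinOn (I : Finset V) : SimpleGraph {x // x ∈ I} where
  Adj a b := a ≠ b ∧ ⟪(a : V), (b : V)⟫ ≠ 0
  symm := by
    constructor
    intro a b h
    refine ⟨h.1.symm, ?_⟩
    rw [real_inner_comm]
    exact h.2
  loopless := by
    constructor
    intro a h
    exact h.1 rfl

/-- `ρ`, the half-sum of the positive roots. -/
noncomputable def halfSumPos (P : RootSystemData V) : V :=
  (2⁻¹ : ℝ) • ∑ β ∈ posRoots P, β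

lemma RSD.inner_self_pos (P : RootSystemData V) {α : V} (hα : α ∈ P.R) :
    0 < ⟪α, α⟫ := by
  have hne : α ≠ 0 := fun h => P.zero_not_mem (h ▸ hα)
  refine lt_of_le_of_ne real_inner_self_nonneg (fun h => hne ?_)
  exact inner_self_eq_zero.mp h.symm

lemma RSD.coeffs_eq_zero (P : RootSystemData V) (g : V → ℝ)
    (h : ∑ α ∈ P.B, g α • α = 0) : ∀ α ∈ P.B, g α = 0 := by
  have hli := P.base_indep
  rw [Fintype.linearIndependent_iff] at hli
  intro α hα
  refine hli (fun b => g b) ?_ ⟨α, hα⟩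
  rw [Finset.univ_eq_attach, Finset.sum_attach P.B (fun x => g x • x)]
  exact h

lemma RSD.obtuse (P : RootSystemData V) {α β : V} (hα : α ∈ P.B) (hβ : β ∈ P.B)
    (hne : α ≠ β) : ⟪α, β⟫ ≤ 0 := by
  classical
  by_contra hpos
  push_neg at hpos
  have hαR := P.base_subset hα
  have hβR := P.base_subset hβ
  obtain ⟨n, hn⟩ := P.crystallographic α hαR β hβR
  have hαα : 0 < ⟪α, α⟫ := RSD.inner_self_pos P hαR
  have hnpos : 0 < (n : ℝ) := by nlinarith
  have hγ : reflVec α β ∈ P.R := P.reflection_mem α hαR β hβR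
  have hγeq : reflVec α β = β - (n : ℝ) • α := by
    unfold reflVec
    rw [hn, mul_div_assoc, div_self hαα.ne', mul_one]
  rcases P.pos_or_neg _ hγ with ⟨e, he, hsum⟩ | ⟨e, he, hsum⟩
  · rw [hγeq] at hsum
    set g : V → ℝ := fun δ =>
      e δ + (if δ = α then (n : ℝ) else 0) - (if δ = β then 1 else 0) with hg
    have hz : ∑ δ ∈ P.B, g δ • δ = 0 := by
      have : ∀ δ ∈ P.B, g δ • δ = e δ • δ + (if δ = α then (n : ℝ) • δ else 0)
          - (if δ = β then (1 : ℝ) • δ else 0) := by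
        intro δ _
        simp only [hg]
        rw [sub_smul, add_smul, ite_smul, ite_smul]
        simp
      rw [Finset.sum_congr rfl this]
      rw [Finset.sum_sub_distrib, Finset.sum_add_distrib,
        Finset.sum_ite_eq' P.B α (fun δ => (n:ℝ) • δ),
        Finset.sum_ite_eq' P.B β (fun δ => (1:ℝ) • δ), if_pos hα, if_pos hβ,
        ← hsum, one_smul]
      abel
    have hgα := RSD.coeffs_eq_zero P g hz α hα
    simp [hg, hne] at hgα
    have := he α
    nlinarith
  · rw [hγeq] at hsum
    have hsum' : -β + (n : ℝ) • α = ∑ δ ∈ P.B, e δ • δ := by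
      rw [← hsum]; abel
    set g : V → ℝ := fun δ =>
      e δ - (if δ = α then (n : ℝ) else 0) + (if δ = β then 1 else 0) with hg
    have hz : ∑ δ ∈ P.B, g δ • δ = 0 := by
      have : ∀ δ ∈ P.B, g δ • δ = e δ • δ - (if δ = α then (n : ℝ) • δ else 0)
          + (if δ = β then (1 : ℝ) • δ else 0) := by
        intro δ _
        simp only [hg]
        rw [add_smul, sub_smul, ite_smul, ite_smul]
        simp
      rw [Finset.sum_congr rfl this]
      rw [Finset.sum_add_distrib, Finset.sum_sub_distrib,
        Finset.sum_ite_eq' P.B α (fun δ => (n:ℝ) • δ),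
        Finset.sum_ite_eq' P.B β (fun δ => (1:ℝ) • δ), if_pos hα, if_pos hβ,
        ← hsum', one_smul]
      abel
    have hgβ := RSD.coeffs_eq_zero P g hz β hβ
    simp [hg, Ne.symm hne] at hgβ
    have := he β
    nlinarith

lemma RSD.coeffs_nonneg (P : RootSystemData V) (lam : V) (c : V → ℝ)
    (hlam : lam = ∑ α ∈ P.B, c α • α)
    (hdom : ∀ α ∈ P.B, 0 ≤ ⟪lam, α⟫) :
    ∀ α ∈ P.B, 0 ≤ c α := by
  classical
  set N : Finset V := P.B.filter (fun α => c α < 0) with hN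
  set lamNeg : V := ∑ α ∈ N, (-(c α)) • α with hlamNeg
  have hNss : N ⊆ P.B := Finset.filter_subset _ _
  have hsplit : lam + lamNeg = ∑ α ∈ P.B \ N, c α • α := by
    rw [hlam, hlamNeg, ← Finset.sum_sdiff hNss]
    simp [neg_smul]
  have h1 : 0 ≤ ⟪lam, lamNeg⟫ := by
    rw [hlamNeg, inner_sum]
    refine Finset.sum_nonneg (fun α hα => ?_)
    rw [real_inner_smul_right]
    have hcα : c α < 0 := (Finset.mem_filter.mp hα).2
    have := hdom α (hNss hα)
    nlinarith
  have h2 : ⟪lam + lamNeg, lamNeg⟫ ≤ 0 := by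
    rw [hsplit, hlamNeg, sum_inner]
    refine Finset.sum_nonpos (fun α hα => ?_)
    rw [real_inner_smul_left, inner_sum]
    have hαB : α ∈ P.B := (Finset.mem_sdiff.mp hα).1
    have hαN : α ∉ N := (Finset.mem_sdiff.mp hα).2
    have hcα : 0 ≤ c α := by
      by_contra h
      exact hαN (Finset.mem_filter.mpr ⟨hαB, lt_of_not_ge h⟩)
    refine mul_nonpos_of_nonneg_of_nonpos hcα ?_
    refine Finset.sum_nonpos (fun β hβ => ?_)
    rw [real_inner_smul_right]
    have hβB : β ∈ P.B := hNss hβ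
    have hcβ : c β < 0 := (Finset.mem_filter.mp hβ).2
    have hne : α ≠ β := by
      rintro rfl
      exact hαN hβ
    have := RSD.obtuse P hαB hβB hne
    nlinarith
  have hz : ⟪lamNeg, lamNeg⟫ = 0 := by
    have : ⟪lam + lamNeg, lamNeg⟫ = ⟪lam, lamNeg⟫ + ⟪lamNeg, lamNeg⟫ :=
      inner_add_left _ _ _
    have hnn : (0:ℝ) ≤ ⟪lamNeg, lamNeg⟫ := real_inner_self_nonneg
    linarith
  have hzero : lamNeg = 0 := inner_self_eq_zero.mp hz
  have hcz : ∀ α ∈ P.B, (if α ∈ N then -(c α) else 0) = 0 := by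
    apply RSD.coeffs_eq_zero P
    rw [← hzero, hlamNeg]
    have hrw : ∀ α ∈ P.B, (if α ∈ N then -(c α) else 0) • α
        = if α ∈ N then (-(c α)) • α else 0 := by
      intro α _
      rw [ite_smul, zero_smul]
    rw [Finset.sum_congr rfl hrw, Finset.sum_ite_mem,
      Finset.inter_eq_right.mpr hNss]
  intro α hα
  by_contra h
  have hαN : α ∈ N := Finset.mem_filter.mpr ⟨hα, lt_of_not_ge h⟩
  have := hcz α hα
  rw [if_pos hαN] at this
  have : c α = 0 := by linarith [neg_eq_zero.mp this]
  exact h (le_of_eq this.symm)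

lemma RSD.coeffs_pos (P : RootSystemData V)
    (hirr : (dynkinOn P.B).Connected) (lam : V) (c : V → ℝ)
    (hlam : lam = ∑ α ∈ P.B, c α • α) (hne : lam ≠ 0)
    (hdom : ∀ α ∈ P.B, 0 ≤ ⟪lam, α⟫) :
    ∀ α ∈ P.B, 0 < c α := by
  classical
  have hnn := RSD.coeffs_nonneg P lam c hlam hdom
  have zeroinner : ∀ α ∈ P.B, c α = 0 → ∀ β ∈ P.B, 0 < c β → ⟪β, α⟫ = 0 := by
    intro α hα hcα
    have hterms : ∀ β ∈ P.B, c β * ⟪β, α⟫ ≤ 0 := by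
      intro β hβ
      rcases eq_or_ne β α with rfl | hneq
      · rw [hcα, zero_mul]
      · have := RSD.obtuse P hβ hα hneq
        have := hnn β hβ
        nlinarith
    have hsum : ∑ β ∈ P.B, c β * ⟪β, α⟫ = ⟪lam, α⟫ := by
      rw [hlam, sum_inner]
      exact Finset.sum_congr rfl (fun β _ => (real_inner_smul_left _ _ _).symm)
    have hsz : ∑ β ∈ P.B, c β * ⟪β, α⟫ = 0 :=
      le_antisymm (Finset.sum_nonpos hterms) (hsum ▸ hdom α hα)
    intro β hβ hcβ
    have := (Finset.sum_eq_zero_iff_of_nonpos hterms).mp hsz β hβ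
    rcases mul_eq_zero.mp this with h | h
    · exact absurd h hcβ.ne'
    · exact h
  -- there exists a β0 with positive coefficient
  have hex : ∃ β0 ∈ P.B, 0 < c β0 := by
    by_contra h
    push_neg at h
    apply hne
    rw [hlam]
    refine Finset.sum_eq_zero (fun α hα => ?_)
    have : c α = 0 := le_antisymm (h α hα) (hnn α hα)
    rw [this, zero_smul]
  obtain ⟨β0, hβ0, hcβ0⟩ := hex
  have key : ∀ {u v : {x // x ∈ P.B}}, (dynkinOn P.B).Walk u v →
      0 < c ↑u → 0 < c ↑v := by
    intro u v w
    induction w with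
    | nil => exact id
    | cons h p ih =>
      rename_i a b cc
      intro ha
      apply ih
      rcases (hnn b b.2).lt_or_eq with h' | h'
      · exact h'
      · exact absurd (zeroinner b b.2 h'.symm a a.2 ha) h.2
  intro α hα
  obtain ⟨w⟩ := hirr.preconnected ⟨β0, hβ0⟩ ⟨α, hα⟩
  exact key w hcβ0

/-- Let `R` be an irreducible finite reduced crystallographic root
system with base `B`. Every nonzero dominant element `λ` of the rational span
of `R` (i.e., with `⟨λ, α∨⟩ = 2⟪λ, α⟫/⟪α, α⟫ ≥ 0` for all `α ∈ B`) can be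
written as `λ = Σ_{α∈B} m_α α` with all coefficients `m_α` strictly positive
rationals. -/
theorem dominant_pos_coeffs {V : Type*} [NormedAddCommGroup V]
    [InnerProductSpace ℝ V] (P : RootSystemData V)
    (hirr : (dynkinOn P.B).Connected)
    (lam : V) (hne : lam ≠ 0)
    (hratspan : ∃ c : V → ℚ, lam = ∑ α ∈ P.R, (c α : ℝ) • α)
    (hdom : ∀ α ∈ P.B, 0 ≤ 2 * ⟪lam, α⟫ / ⟪α, α⟫) :
    ∃ m : V → ℚ, (∀ α ∈ P.B, 0 < m α) ∧ lam = ∑ α ∈ P.B, (m α : ℝ) • α := by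
  classical
  have hdom' : ∀ α ∈ P.B, 0 ≤ ⟪lam, α⟫ := by
    intro α hα
    have h2 := hdom α hα
    have hpos := RSD.inner_self_pos P (P.base_subset hα)
    have h3 := mul_nonneg h2 hpos.le
    rw [div_mul_cancel₀ _ hpos.ne'] at h3
    linarith
  obtain ⟨e, he⟩ := hratspan
  choose n hn using P.crystallographic
  set A : Matrix {x // x ∈ P.B} {x // x ∈ P.B} ℚ := fun a b =>
    ((n a (P.base_subset a.2) b (P.base_subset b.2) : ℤ) : ℚ) with hAdef
  have hA : ∀ a b : {x // x ∈ P.B},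
      2 * ⟪(a:V), (b:V)⟫ = ((A a b : ℚ) : ℝ) * ⟪(a:V), (a:V)⟫ := by
    intro a b
    have := hn a (P.base_subset a.2) b (P.base_subset b.2)
    rw [hAdef]
    push_cast
    exact this
  have hcomb : ∀ (x : {y // y ∈ P.B} → ℚ) (a : {y // y ∈ P.B}),
      2 * ⟪(a:V), ∑ b : {y // y ∈ P.B}, (x b : ℝ) • (b:V)⟫
        = ((A.mulVec x a : ℚ) : ℝ) * ⟪(a:V), (a:V)⟫ := by
    intro x a
    rw [inner_sum, Finset.mul_sum]
    have hterm : ∀ b : {y // y ∈ P.B},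
        2 * ⟪(a:V), (x b : ℝ) • (b:V)⟫
          = ((A a b * x b : ℚ) : ℝ) * ⟪(a:V), (a:V)⟫ := by
      intro b
      rw [real_inner_smul_right]
      have := hA a b
      push_cast
      linear_combination ((x b : ℚ) : ℝ) * this
    rw [Finset.sum_congr rfl (fun b _ => hterm b)]
    have : A.mulVec x a = ∑ b, A a b * x b := by
      simp [Matrix.mulVec, dotProduct]
    rw [this]
    push_cast
    rw [Finset.sum_mul]
  have hTinj : Function.Injective A.mulVecLin := by
    rw [← LinearMap.ker_eq_bot, LinearMap.ker_eq_bot']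
    intro x hx
    rw [Matrix.mulVecLin_apply] at hx
    set v : V := ∑ b : {y // y ∈ P.B}, (x b : ℝ) • (b:V) with hv
    have hiv : ∀ a : {y // y ∈ P.B}, ⟪(a:V), v⟫ = 0 := by
      intro a
      have h1 := hcomb x a
      rw [hx] at h1
      simp only [Pi.zero_apply, Rat.cast_zero, zero_mul] at h1
      rw [hv]
      linarith
    have hvv : ⟪v, v⟫ = 0 := by
      have : ⟪v, v⟫ = ∑ b : {y // y ∈ P.B}, (x b : ℝ) * ⟪(b:V), v⟫ := by
        conv_lhs => rw [hv]
        rw [sum_inner]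
        exact Finset.sum_congr rfl (fun b _ => real_inner_smul_left _ _ _)
      rw [this]
      simp [hiv]
    have hveq : v = 0 := inner_self_eq_zero.mp hvv
    have hcz := RSD.coeffs_eq_zero P
      (fun y => if h : y ∈ P.B then ((x ⟨y, h⟩ : ℚ) : ℝ) else 0) ?_
    · funext b
      have := hcz b.1 b.2
      rw [dif_pos b.2] at this
      exact_mod_cast this
    · rw [← hveq, hv, ← Finset.sum_attach P.B
        (fun y => (if h : y ∈ P.B then ((x ⟨y, h⟩ : ℚ) : ℝ) else 0) • y),
        Finset.univ_eq_attach]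
      refine Finset.sum_congr rfl (fun b _ => ?_)
      rw [dif_pos b.2]
  have hTsurj : Function.Surjective A.mulVecLin :=
    LinearMap.injective_iff_surjective.mp hTinj
  set d : {y // y ∈ P.B} → ℚ := fun a => ∑ β ∈ P.R.attach,
    e ↑β * ((n a (P.base_subset a.2) ↑β β.2 : ℤ) : ℚ) with hddef
  have hd : ∀ a : {y // y ∈ P.B},
      2 * ⟪(a:V), lam⟫ = ((d a : ℚ) : ℝ) * ⟪(a:V), (a:V)⟫ := by
    intro a
    rw [he, ← Finset.sum_attach P.R (fun β => ((e β : ℚ) : ℝ) • β),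
      inner_sum, Finset.mul_sum, hddef]
    push_cast
    rw [Finset.sum_mul]
    refine Finset.sum_congr rfl (fun β _ => ?_)
    rw [real_inner_smul_right]
    have := hn a (P.base_subset a.2) ↑β β.2
    push_cast
    linear_combination ((e ↑β : ℚ) : ℝ) * this
  obtain ⟨x, hx⟩ := hTsurj d
  rw [Matrix.mulVecLin_apply] at hx
  set m : V → ℚ := fun y => if h : y ∈ P.B then x ⟨y, h⟩ else 1 with hm
  set mu : V := ∑ α ∈ P.B, ((m α : ℚ) : ℝ) • α with hmu
  have hmusum : mu = ∑ b : {y // y ∈ P.B}, (x b : ℝ) • (b:V) := by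
    rw [hmu, ← Finset.sum_attach P.B (fun y => ((m y : ℚ) : ℝ) • y),
      Finset.univ_eq_attach]
    refine Finset.sum_congr rfl (fun b _ => ?_)
    rw [hm]
    simp only []
    rw [dif_pos b.2]
  have hiv : ∀ a : {y // y ∈ P.B}, ⟪(a:V), lam - mu⟫ = 0 := by
    intro a
    have h1 := hd a
    have h2 := hcomb x a
    rw [← hmusum, hx] at h2
    rw [inner_sub_right]
    linarith
  have hrootspan : ∀ β ∈ P.R, β ∈ Submodule.span ℝ (↑P.B : Set V) := by
    intro β hβ
    rcases P.pos_or_neg β hβ with ⟨f, _, hf⟩ | ⟨f, _, hf⟩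
    · rw [hf]
      exact Submodule.sum_smul_mem _ _ (fun α hα => Submodule.subset_span hα)
    · have hβeq : β = -∑ α ∈ P.B, f α • α := by rw [← hf, neg_neg]
      rw [hβeq]
      exact Submodule.neg_mem _
        (Submodule.sum_smul_mem _ _ (fun α hα => Submodule.subset_span hα))
  have hlamspan : lam ∈ Submodule.span ℝ (↑P.B : Set V) := by
    rw [he]
    exact Submodule.sum_smul_mem _ _ (fun β hβ => hrootspan β hβ)
  have hmuspan : mu ∈ Submodule.span ℝ (↑P.B : Set V) := by
    rw [hmu]
    exact Submodule.sum_smul_mem _ _ (fun α hα => Submodule.subset_span hα)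
  have hwspan : lam - mu ∈ Submodule.span ℝ (↑P.B : Set V) :=
    Submodule.sub_mem _ hlamspan hmuspan
  have hzero : ∀ y ∈ Submodule.span ℝ (↑P.B : Set V), ⟪y, lam - mu⟫ = 0 := by
    intro y hy
    induction hy using Submodule.span_induction with
    | mem z hz => exact hiv ⟨z, hz⟩
    | zero => simp
    | add a b _ _ ha hb => rw [inner_add_left, ha, hb, add_zero]
    | smul r a _ ha => rw [real_inner_smul_left, ha, mul_zero]
  have hsub : lam - mu = 0 := inner_self_eq_zero.mp (hzero _ hwspan)
  have hlammu : lam = mu := by rwa [sub_eq_zero] at hsub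
  refine ⟨m, ?_, by rw [hlammu, hmu]⟩
  intro α hα
  have hposreal := RSD.coeffs_pos P hirr lam (fun y => ((m y : ℚ) : ℝ))
    (by rw [hlammu, hmu]) hne hdom' α hα
  exact_mod_cast show (0:ℝ) < ((m α : ℚ) : ℝ) from hposreal
end

section
/- Let R be a finite reduced crystallographic root system with base B, Weyl group W, length function ℓ, and let ρ be the half-sum of the positive roots. If w ∈ W has ℓ(w) = 2, then ρ − w(ρ) is not a root. -/
open scoped RealInnerProductSpace

variable {V : Type*} [NormedAddCommGroup V] [InnerProductSpace ℝ V]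

section Aux

open scoped Classical

variable (P : RootSystemData V)

lemma coeff_zero (d : V → ℝ) (h : ∑ α ∈ P.B, d α • α = 0) :
    ∀ α ∈ P.B, d α = 0 := by
  have hli := linearIndependent_iff'.mp P.base_indep Finset.univ
    (fun i => d i.1) ?_
  · intro α hα
    exact hli ⟨α, hα⟩ (Finset.mem_univ _)
  · rw [Finset.univ_eq_attach, Finset.sum_attach P.B (fun α => d α • α)]
    exact h

lemma root_ne_zero {α : V} (hα : α ∈ P.R) : α ≠ 0 := by
  rintro rfl; exact P.zero_not_mem hα

lemma root_inner_ne_zero {α : V} (hα : α ∈ P.R) : ⟪α, α⟫ ≠ 0 := by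
  rw [real_inner_self_eq_norm_sq]
  exact pow_ne_zero 2 (norm_ne_zero_iff.mpr (root_ne_zero P hα))

lemma reflVec_self {α : V} (hα : ⟪α, α⟫ ≠ 0) : reflVec α α = -α := by
  unfold reflVec
  have h2 : (2 * ⟪α, α⟫) / ⟪α, α⟫ = 2 := by field_simp
  rw [h2]; module

lemma reflVec_reflVec {α : V} (hα : ⟪α, α⟫ ≠ 0) (x : V) :
    reflVec α (reflVec α x) = x := by
  unfold reflVec
  rw [inner_sub_right, real_inner_smul_right]
  match_scalars
  · ring
  · field_simp
    ring

lemma mem_posRoots {P : RootSystemData V} {γ : V} :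
    γ ∈ posRoots P ↔ γ ∈ P.R ∧ IsNonnegComb P.B γ :=
  @Finset.mem_filter V _ (Classical.decPred _) P.R γ

lemma sum_ite_base {b : V} (hb : b ∈ P.B) :
    ∑ α ∈ P.B, (if α = b then (1:ℝ) else 0) • α = b := by
  simp [ite_smul, Finset.sum_ite_eq', hb]

lemma not_nonneg_neg {b : V} (hb : b ∈ P.B) : ¬ IsNonnegComb P.B (-b) := by
  rintro ⟨c, hc, hsum⟩
  have h0 : ∑ α ∈ P.B, (c α + if α = b then 1 else 0) • α = 0 := by
    simp only [add_smul, Finset.sum_add_distrib, ← hsum, sum_ite_base P hb]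
    abel
  have := coeff_zero P _ h0 b hb
  rw [if_pos rfl] at this
  linarith [hc b]

lemma not_nonneg_sub {a b : V} (ha : a ∈ P.B) (hb : b ∈ P.B) (hne : a ≠ b) :
    ¬ IsNonnegComb P.B (b - a) := by
  rintro ⟨c, hc, hsum⟩
  have h0 : ∑ α ∈ P.B,
      (c α + (if α = a then 1 else 0) - (if α = b then 1 else 0)) • α = 0 := by
    simp only [add_smul, sub_smul, Finset.sum_sub_distrib, Finset.sum_add_distrib,
      ← hsum, sum_ite_base P ha, sum_ite_base P hb]
    abel
  have := coeff_zero P _ h0 a ha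
  rw [if_pos rfl, if_neg hne] at this
  linarith [hc a]

lemma base_mem_posRoots {b : V} (hb : b ∈ P.B) : b ∈ posRoots P := by
  refine mem_posRoots.mpr ⟨P.base_subset hb, ⟨fun α => if α = b then 1 else 0,
    fun α => by by_cases h : α = b <;> simp [h], (sum_ite_base P hb).symm⟩⟩

/-- A positive root other than `b` has a positive coefficient on some simple
root other than `b`. -/
lemma exists_other_coeff {b : V} (hb : b ∈ P.B) {γ : V} (hγR : γ ∈ P.R)
    {c : V → ℝ} (hc : ∀ α, 0 ≤ c α) (hsum : γ = ∑ α ∈ P.B, c α • α)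
    (hne : γ ≠ b) : ∃ α ∈ P.B, α ≠ b ∧ 0 < c α := by
  by_contra hno
  push_neg at hno
  have hz : ∀ α ∈ P.B, α ≠ b → c α = 0 := fun α h1 h2 =>
    le_antisymm (hno α h1 h2) (hc α)
  have hγb : γ = c b • b := by
    rw [hsum, Finset.sum_eq_single_of_mem b hb]
    intro α h1 h2
    rw [hz α h1 h2, zero_smul]
  have := P.reduced b (P.base_subset hb) (c b) (by rw [← hγb]; exact hγR)
  rcases this with h1 | h1
  · exact hne (by rw [hγb, h1, one_smul])
  · linarith [hc b]

/-- The reflection in a simple root `b` permutes the positive roots other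
than `b`. -/
lemma reflVec_mem_posRoots {b : V} (hb : b ∈ P.B) {γ : V}
    (hγ : γ ∈ posRoots P) (hne : γ ≠ b) :
    reflVec b γ ∈ posRoots P ∧ reflVec b γ ≠ b := by
  have hbR : b ∈ P.R := P.base_subset hb
  obtain ⟨hγR, c, hc, hsum⟩ := mem_posRoots.mp hγ
  obtain ⟨α₀, hα₀B, hα₀b, hα₀pos⟩ := exists_other_coeff P hb hγR hc hsum hne
  have hδR : reflVec b γ ∈ P.R := P.reflection_mem b hbR γ hγR
  set t : ℝ := (2 * ⟪b, γ⟫) / ⟪b, b⟫ with ht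
  have hδ : reflVec b γ = γ - t • b := rfl
  have hδpos : IsNonnegComb P.B (reflVec b γ) := by
    rcases P.pos_or_neg _ hδR with h | h
    · exact h
    · exfalso
      obtain ⟨d, hd, hdsum⟩ := h
      have h0 : ∑ α ∈ P.B,
          (c α + d α - (if α = b then t else 0)) • α = 0 := by
        have hib : ∑ α ∈ P.B, (if α = b then t else 0) • α = t • b := by
          simp [ite_smul, Finset.sum_ite_eq', hb]
        simp only [add_smul, sub_smul, Finset.sum_sub_distrib,
          Finset.sum_add_distrib, ← hsum, ← hdsum, hib, hδ]
        abel
      have := coeff_zero P _ h0 α₀ hα₀B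
      rw [if_neg hα₀b] at this
      linarith [hd α₀]
  refine ⟨mem_posRoots.mpr ⟨hδR, hδpos⟩, ?_⟩
  intro habs
  have h3 := congrArg (reflVec b) habs
  rw [reflVec_reflVec (root_inner_ne_zero P hbR),
    reflVec_self (root_inner_ne_zero P hbR)] at h3
  obtain ⟨_, hcomb⟩ := mem_posRoots.mp hγ
  rw [h3] at hcomb
  exact not_nonneg_neg P hb hcomb

/-- Reflection in a simple root `b` sends `ρ` to `ρ - b`. -/
lemma s_halfSumPos {b : V} (hb : b ∈ P.B) :
    P.s b (halfSumPos P) = halfSumPos P - b := by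
  have hbR : b ∈ P.R := P.base_subset hb
  have hinv := reflVec_reflVec (V := V) (root_inner_ne_zero P hbR)
  have hsum : ∑ γ ∈ (posRoots P).erase b, reflVec b γ
      = ∑ γ ∈ (posRoots P).erase b, γ := by
    refine Finset.sum_nbij' (fun γ => reflVec b γ) (fun γ => reflVec b γ)
      ?_ ?_ ?_ ?_ ?_
    · intro γ hγ
      rw [Finset.mem_erase] at hγ ⊢
      have := reflVec_mem_posRoots P hb hγ.2 hγ.1
      exact ⟨this.2, this.1⟩
    · intro γ hγ
      rw [Finset.mem_erase] at hγ ⊢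
      have := reflVec_mem_posRoots P hb hγ.2 hγ.1
      exact ⟨this.2, this.1⟩
    · intro γ _; exact hinv γ
    · intro γ _; exact hinv γ
    · intro γ _; rfl
  have hsplit : ∑ γ ∈ posRoots P, (P.s b) γ
      = ∑ γ ∈ posRoots P, γ - (2:ℝ) • b := by
    rw [← Finset.sum_erase_add _ _ (base_mem_posRoots P hb),
        ← Finset.sum_erase_add _ (fun γ => γ) (base_mem_posRoots P hb)]
    have h2 : ∀ γ ∈ (posRoots P).erase b, P.s b γ = reflVec b γ := by
      intro γ hγ
      exact P.s_apply b hbR γ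
    rw [Finset.sum_congr rfl h2, hsum, P.s_apply b hbR b,
      reflVec_self (root_inner_ne_zero P hbR)]
    module
  unfold halfSumPos
  rw [map_smul, map_sum, hsplit]
  module

lemma s_mul_self {b : V} (hb : b ∈ P.B) : P.s b * P.s b = 1 := by
  have hbR : b ∈ P.R := P.base_subset hb
  ext x
  show P.s b (P.s b x) = x
  rw [P.s_apply b hbR, P.s_apply b hbR,
    reflVec_reflVec (root_inner_ne_zero P hbR)]

end Aux

/-- Let `R` be a finite reduced crystallographic root system with
base `B`, Weyl group `W`, length function `ℓ`, and `ρ` the half-sum of the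
positive roots. If `w ∈ W` has `ℓ(w) = 2`, then `ρ - w(ρ)` is not a root. -/
theorem rho_sub_w_rho_not_root {V : Type*} [NormedAddCommGroup V]
    [InnerProductSpace ℝ V] (P : RootSystemData V)
    (w : V ≃ₗ[ℝ] V) (hw : w ∈ weylGroup P)
    (hlen : lengthIn (simples P) w = 2) :
    halfSumPos P - w (halfSumPos P) ∉ P.R := by
  classical
  -- extract an expression w = s a * s b with a, b simple
  have hlen' : sInf {n | ∃ l : List (V ≃ₗ[ℝ] V), l.length = n ∧
      (∀ x ∈ l, x ∈ simples P) ∧ l.prod = w} = 2 := hlen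
  have hne : Set.Nonempty {n | ∃ l : List (V ≃ₗ[ℝ] V), l.length = n ∧
      (∀ x ∈ l, x ∈ simples P) ∧ l.prod = w} := by
    by_contra h
    rw [Set.not_nonempty_iff_eq_empty] at h
    rw [h, Nat.sInf_empty] at hlen'
    exact two_ne_zero hlen'.symm
  have hmem := Nat.sInf_mem hne
  rw [hlen'] at hmem
  obtain ⟨l, hl2, hls, hlp⟩ := hmem
  obtain ⟨x, y, rfl⟩ := List.length_eq_two.mp hl2
  obtain ⟨a, haB, rfl⟩ := hls x (by simp)
  obtain ⟨b, hbB, rfl⟩ := hls y (by simp)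
  have haB' : a ∈ P.B := haB
  have hbB' : b ∈ P.B := hbB
  have haR : a ∈ P.R := P.base_subset haB'
  have hbR : b ∈ P.R := P.base_subset hbB'
  have hlp' : P.s a * P.s b = w := by simpa using hlp
  -- a ≠ b
  have hab : a ≠ b := by
    rintro rfl
    have hw1 : w = 1 := by rw [← hlp', s_mul_self P haB']
    have h0 : 0 ∈ {n | ∃ l : List (V ≃ₗ[ℝ] V), l.length = n ∧
        (∀ x ∈ l, x ∈ simples P) ∧ l.prod = w} :=
      ⟨[], rfl, by simp, by simp [hw1]⟩
    have := Nat.sInf_le h0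
    omega
  -- compute ρ - w ρ
  intro hroot
  have hwρ : w (halfSumPos P) = halfSumPos P - a - P.s a b := by
    rw [← hlp']
    show P.s a (P.s b (halfSumPos P)) = _
    rw [s_halfSumPos P hbB', map_sub, s_halfSumPos P haB']
  have hγ : halfSumPos P - w (halfSumPos P) = a + P.s a b := by
    rw [hwρ]; abel
  rw [hγ] at hroot
  -- then b - a would be a root
  have hba : b - a ∈ P.R := by
    have h1 := P.reflection_mem a haR _ hroot
    have h2 : reflVec a (a + P.s a b) = b - a := by
      rw [← P.s_apply a haR, map_add, P.s_apply a haR a,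
        reflVec_self (root_inner_ne_zero P haR),
        P.s_apply a haR (P.s a b), P.s_apply a haR b,
        reflVec_reflVec (root_inner_ne_zero P haR)]
      abel
    rwa [h2] at h1
  -- but b - a has coefficients of mixed sign: contradiction
  rcases P.pos_or_neg _ hba with h | h
  · exact not_nonneg_sub P haB' hbB' hab h
  · rw [neg_sub] at h
    exact not_nonneg_sub P hbB' haB' hab.symm h
end
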